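/- arXiv:2410.14477 — 4 statements merged into one kernel-verified Lean document; each statement's English description precedes it below -/
import Mathlib

section
/- For a bounded linear operator A on a Hilbert space and ε > 0, a complex number z satisfies ‖(zI − A)^{−1}‖^{−1} ≤ ε (with the convention that this holds if zI − A is not boundedly invertible) if and only if there exists a bounded operator E with ‖E‖ ≤ ε such that z is in the spectrum of A + E. -/
/-- Resolvent-norm characterization of the ε-pseudospectrum: `z` satisfies
`‖(zI - A)⁻¹‖⁻¹ ≤ ε` (with the convention that this holds when `zI - A` is not
boundedly invertible, i.e. `z ∈ Spec A`) iff `z ∈ Spec (A + E)` for some bounded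
perturbation `E` with `‖E‖ ≤ ε`. -/
theorem stmt_2
    {H : Type*} [NormedAddCommGroup H] [InnerProductSpace ℂ H] [CompleteSpace H]
    [Nontrivial H]
    (A : H →L[ℂ] H) (ε : ℝ) (hε : 0 < ε) (z : ℂ) :
    (z ∈ spectrum ℂ A ∨
      ∀ B : H →L[ℂ] H,
        B * (z • (1 : H →L[ℂ] H) - A) = 1 ∧ (z • (1 : H →L[ℂ] H) - A) * B = 1 →
          ‖B‖⁻¹ ≤ ε)
    ↔ ∃ E : H →L[ℂ] H, ‖E‖ ≤ ε ∧ z ∈ spectrum ℂ (A + E) := by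
  have hmem : ∀ (T : H →L[ℂ] H) (w : ℂ),
      w ∈ spectrum ℂ T ↔ ¬ IsUnit (w • (1 : H →L[ℂ] H) - T) := by
    intro T w
    rw [spectrum.mem_iff, Algebra.algebraMap_eq_smul_one]
  constructor
  · intro h
    by_cases hz : z ∈ spectrum ℂ A
    · exact ⟨0, by simpa using hε.le, by simpa using hz⟩
    · have hu : IsUnit (z • (1 : H →L[ℂ] H) - A) := by
        rw [hmem] at hz; exact not_not.mp hz
      obtain ⟨u, hu_eq⟩ := hu
      set B : H →L[ℂ] H := ↑u⁻¹ with hBdef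
      have hB1 : B * (z • (1 : H →L[ℂ] H) - A) = 1 := by
        rw [← hu_eq]; exact u.inv_mul
      have hB2 : (z • (1 : H →L[ℂ] H) - A) * B = 1 := by
        rw [← hu_eq]; exact u.mul_inv
      have hBε : ‖B‖⁻¹ ≤ ε := (h.resolve_left hz) B ⟨hB1, hB2⟩
      have hBne : B ≠ 0 := by
        intro h0
        apply one_ne_zero (α := H →L[ℂ] H)
        rw [← hB1, h0, zero_mul]
      have hBpos : (0:ℝ) < ‖B‖ := norm_pos_iff.mpr hBne
      set c : ℂ := ((‖B‖ : ℂ))^2 with hc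
      have hcne : c ≠ 0 := by
        simp [hc, Complex.ofReal_ne_zero, hBpos.ne']
      set E : H →L[ℂ] H := c⁻¹ • (star B) with hE
      have hnormE : ‖E‖ = ‖B‖⁻¹ := by
        rw [hE, norm_smul, norm_star]
        have : ‖c⁻¹‖ = (‖B‖^2)⁻¹ := by
          rw [norm_inv, hc]
          simp [Complex.norm_real, abs_of_nonneg hBpos.le]
        rw [this]
        field_simp
    -- spectrum fact
      have hspec : c ∈ spectrum ℂ (star B * B) := by
        have h1 : ‖star B * B‖ ∈ spectrum ℝ (star B * B) :=
          CStarAlgebra.norm_mem_spectrum_of_nonneg (star_mul_self_nonneg B)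
        have h2 : ((‖star B * B‖ : ℝ) : ℂ) ∈ spectrum ℂ (star B * B) := by
          exact_mod_cast spectrum.algebraMap_mem ℂ h1
        have h3 : ‖star B * B‖ = ‖B‖ * ‖B‖ := CStarRing.norm_star_mul_self
        rw [h3] at h2
        convert h2 using 2
        rw [hc]; push_cast; ring
      have cu : ℂˣ := Units.mk0 c hcne
      have hone : (1 : ℂ) ∈ spectrum ℂ (E * B) := by
        have := (spectrum.smul_mem_smul_iff (a := star B * B) (s := c)
          (r := (Units.mk0 c hcne)⁻¹)).mpr hspec
        have heq : ((Units.mk0 c hcne)⁻¹ : ℂˣ) • (star B * B) = E * B := by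
          simp [hE, smul_mul_assoc, Units.smul_def]
        have heq2 : ((Units.mk0 c hcne)⁻¹ : ℂˣ) • c = 1 := by
          simp [Units.smul_def, inv_mul_cancel₀ hcne]
        rwa [heq, heq2] at this
      refine ⟨E, by rw [hnormE]; exact hBε, ?_⟩
      rw [hmem]
      intro hunit
      have hfact : z • (1 : H →L[ℂ] H) - (A + E)
          = (1 - E * B) * (z • (1 : H →L[ℂ] H) - A) := by
        rw [sub_mul, one_mul, mul_assoc, hB1, mul_one]
        abel
      have : IsUnit (1 - E * B) := by
        have h4 : (1 - E * B) = (z • (1 : H →L[ℂ] H) - (A + E)) * B := by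
          rw [hfact, mul_assoc, hB2, mul_one]
        rw [h4]
        exact hunit.mul ⟨u⁻¹, rfl⟩
      rw [hmem] at hone
      apply hone
      simpa using this
  · rintro ⟨E, hEnorm, hz⟩
    by_cases hzA : z ∈ spectrum ℂ A
    · exact Or.inl hzA
    · right
      rintro B ⟨hB1, hB2⟩
      rw [hmem] at hz
      have hfact : z • (1 : H →L[ℂ] H) - (A + E)
          = (1 - E * B) * (z • (1 : H →L[ℂ] H) - A) := by
        rw [sub_mul, one_mul, mul_assoc, hB1, mul_one]
        abel
      have hnu : ¬ IsUnit (1 - E * B) := by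
        intro hunit
        apply hz
        rw [hfact]
        exact hunit.mul ⟨⟨_, B, hB2, hB1⟩, rfl⟩
      have hge : 1 ≤ ‖E * B‖ := by
        by_contra hlt
        exact hnu (isUnit_one_sub_of_norm_lt_one (lt_of_not_ge hlt))
      have h5 : 1 ≤ ε * ‖B‖ :=
        hge.trans ((norm_mul_le E B).trans (mul_le_mul_of_nonneg_right hEnorm (norm_nonneg B)))
      have hBpos : 0 < ‖B‖ := by nlinarith
      have h6 : ‖B‖⁻¹ * 1 ≤ ‖B‖⁻¹ * (ε * ‖B‖) :=
        mul_le_mul_of_nonneg_left h5 (inv_nonneg.mpr hBpos.le)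
      calc ‖B‖⁻¹ = ‖B‖⁻¹ * 1 := by ring
        _ ≤ ‖B‖⁻¹ * (ε * ‖B‖) := h6
        _ = ε * (‖B‖⁻¹ * ‖B‖) := by ring
        _ = ε := by rw [inv_mul_cancel₀ hBpos.ne', mul_one]
end

section
/- Let A be a bounded diagonalizable operator on a separable Hilbert space, i.e., A = X D X^{−1} with X boundedly invertible and D a diagonal (multiplication) operator. Then for every ε > 0, the ε-pseudospectrum of A is contained in the set of points at distance at most ε·κ(X) from Spec(A), where κ(X) = ‖X‖·‖X^{−1}‖; moreover Spec(A) + B_ε ⊆ Spec_ε(A). -/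
open scoped ENNReal

private lemma memlp_mul_aux {ι : Type*} (m : ι → ℂ) (C : ℝ) (hC : 0 ≤ C)
    (hm : ∀ i, ‖m i‖ ≤ C) (f : lp (fun _ : ι => ℂ) 2) :
    Memℓp (fun i => m i * f i) 2 := by
  apply memℓp_gen
  have hf : Summable fun i => ‖f i‖ ^ (2 : ℝ≥0∞).toReal :=
    (lp.memℓp f).summable (by norm_num)
  refine Summable.of_nonneg_of_le (fun i => ?_) (fun i => ?_)
    (hf.mul_left (C ^ (2 : ℝ≥0∞).toReal))
  · positivity
  · have h1 : ‖m i * f i‖ ≤ C * ‖f i‖ := by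
      rw [norm_mul]
      exact mul_le_mul_of_nonneg_right (hm i) (norm_nonneg _)
    calc ‖m i * f i‖ ^ (2 : ℝ≥0∞).toReal
        ≤ (C * ‖f i‖) ^ (2 : ℝ≥0∞).toReal :=
          Real.rpow_le_rpow (norm_nonneg _) h1 (by norm_num)
      _ = C ^ (2 : ℝ≥0∞).toReal * ‖f i‖ ^ (2 : ℝ≥0∞).toReal :=
          Real.mul_rpow hC (norm_nonneg _)

/-- Existence of a bounded diagonal operator with prescribed diagonal entries. -/
private lemma exists_diag {H : Type*} [NormedAddCommGroup H] [InnerProductSpace ℂ H]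
    [CompleteSpace H] {ι : Type*} (e : HilbertBasis ι ℂ H)
    (m : ι → ℂ) (C : ℝ) (hC : 0 ≤ C) (hm : ∀ i, ‖m i‖ ≤ C) :
    ∃ M : H →L[ℂ] H, (∀ i, M (e i) = m i • e i) ∧ ‖M‖ ≤ C := by
  classical
  let g : lp (fun _ : ι => ℂ) 2 → lp (fun _ : ι => ℂ) 2 :=
    fun f => ⟨fun i => m i * f i, memlp_mul_aux m C hC hm f⟩
  have hg_apply : ∀ f i, (g f : ∀ _ : ι, ℂ) i = m i * f i := fun f i => rfl
  have hg_norm : ∀ f, ‖g f‖ ≤ C * ‖f‖ := by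
    intro f
    apply lp.norm_le_of_tsum_le (by norm_num) (by positivity)
    have hsum_f : Summable fun i => ‖f i‖ ^ (2 : ℝ≥0∞).toReal :=
      (lp.memℓp f).summable (by norm_num)
    have hsum_g : Summable fun i => ‖(g f : ∀ _ : ι, ℂ) i‖ ^ (2 : ℝ≥0∞).toReal :=
      (lp.memℓp (g f)).summable (by norm_num)
    have hle : ∑' i, ‖(g f : ∀ _ : ι, ℂ) i‖ ^ (2 : ℝ≥0∞).toReal
        ≤ ∑' i, C ^ (2 : ℝ≥0∞).toReal * ‖f i‖ ^ (2 : ℝ≥0∞).toReal := by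
      refine Summable.tsum_le_tsum (fun i => ?_) hsum_g (hsum_f.mul_left _)
      rw [hg_apply]
      have h1 : ‖m i * f i‖ ≤ C * ‖f i‖ := by
        rw [norm_mul]
        exact mul_le_mul_of_nonneg_right (hm i) (norm_nonneg _)
      calc ‖m i * f i‖ ^ (2 : ℝ≥0∞).toReal
          ≤ (C * ‖f i‖) ^ (2 : ℝ≥0∞).toReal :=
            Real.rpow_le_rpow (norm_nonneg _) h1 (by norm_num)
        _ = C ^ (2 : ℝ≥0∞).toReal * ‖f i‖ ^ (2 : ℝ≥0∞).toReal :=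
            Real.mul_rpow hC (norm_nonneg _)
    calc ∑' i, ‖(g f : ∀ _ : ι, ℂ) i‖ ^ (2 : ℝ≥0∞).toReal
        ≤ ∑' i, C ^ (2 : ℝ≥0∞).toReal * ‖f i‖ ^ (2 : ℝ≥0∞).toReal := hle
      _ = C ^ (2 : ℝ≥0∞).toReal * ∑' i, ‖f i‖ ^ (2 : ℝ≥0∞).toReal := tsum_mul_left
      _ = C ^ (2 : ℝ≥0∞).toReal * ‖f‖ ^ (2 : ℝ≥0∞).toReal := by
          rw [lp.norm_rpow_eq_tsum (by norm_num) f]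
      _ = (C * ‖f‖) ^ (2 : ℝ≥0∞).toReal :=
          (Real.mul_rpow hC (norm_nonneg _)).symm
  let L : H →ₗ[ℂ] H :=
    { toFun := fun x => e.repr.symm (g (e.repr x))
      map_add' := by
        intro x y
        show e.repr.symm (g (e.repr (x + y))) =
          e.repr.symm (g (e.repr x)) + e.repr.symm (g (e.repr y))
        rw [← map_add]
        congr 1
        apply lp.ext
        funext i
        simp [hg_apply, mul_add]
      map_smul' := by
        intro c x
        show e.repr.symm (g (e.repr (c • x))) = c • e.repr.symm (g (e.repr x))
        rw [← map_smul]
        congr 1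
        apply lp.ext
        funext i
        simp only [hg_apply, map_smul, lp.coeFn_smul, Pi.smul_apply, smul_eq_mul]
        ring }
  have hLbound : ∀ x, ‖L x‖ ≤ C * ‖x‖ := by
    intro x
    show ‖e.repr.symm (g (e.repr x))‖ ≤ C * ‖x‖
    rw [LinearIsometryEquiv.norm_map]
    calc ‖g (e.repr x)‖ ≤ C * ‖e.repr x‖ := hg_norm _
      _ = C * ‖x‖ := by rw [LinearIsometryEquiv.norm_map]
  refine ⟨L.mkContinuous C hLbound, fun i => ?_, L.mkContinuous_norm_le hC hLbound⟩
  show e.repr.symm (g (e.repr (e i))) = m i • e i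
  have h1 : g (e.repr (e i)) = m i • e.repr (e i) := by
    rw [e.repr_self]
    apply lp.ext
    funext j
    by_cases hj : j = i
    · subst hj
      simp [hg_apply, lp.single_apply_self]
    · simp [hg_apply, lp.single_apply_ne _ _ _ hj, Pi.single_apply, hj]
  rw [h1, map_smul, LinearIsometryEquiv.symm_apply_apply]

/-- Bauer–Fike theorem for bounded diagonalizable operators: if `A = X ∘ Dg ∘ X⁻¹`
with `X` boundedly invertible and `Dg` diagonal in a Hilbert basis, then the
ε-pseudospectrum of `A` is contained in the `ε·κ(X)`-neighbourhood of `Spec A`,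
where `κ(X) = ‖X‖·‖X⁻¹‖; moreover `Spec A + B_ε ⊆ Spec_ε A`. -/
theorem stmt_3
    {H : Type*} [NormedAddCommGroup H] [InnerProductSpace ℂ H] [CompleteSpace H]
    [TopologicalSpace.SeparableSpace H]
    {ι : Type*} (A X Xinv Dg : H →L[ℂ] H)
    (hX1 : X ∘L Xinv = 1) (hX2 : Xinv ∘L X = 1)
    (e : HilbertBasis ι ℂ H) (d : ι → ℂ)
    (hDg : ∀ i, Dg (e i) = d i • e i)
    (hA : A = X ∘L Dg ∘L Xinv)
    (ε : ℝ) (hε : 0 < ε) :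
    (∀ (E : H →L[ℂ] H) (z : ℂ), ‖E‖ ≤ ε → z ∈ spectrum ℂ (A + E) →
      ∃ w ∈ spectrum ℂ A, ‖z - w‖ ≤ ε * (‖X‖ * ‖Xinv‖)) ∧
    (∀ w ∈ spectrum ℂ A, ∀ c : ℂ, ‖c‖ ≤ ε →
      ∃ E : H →L[ℂ] H, ‖E‖ ≤ ε ∧ w + c ∈ spectrum ℂ (A + E)) := by
  constructor
  · -- Part 1 : Bauer–Fike inclusion
    intro E z hE hz
    rcases subsingleton_or_nontrivial H with hH | hH
    · exact absurd (isUnit_of_subsingleton _) (spectrum.mem_iff.mp hz)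
    haveI : Nontrivial (H →L[ℂ] H) := by
      obtain ⟨x, hx⟩ := exists_ne (0 : H)
      refine ⟨1, 0, fun h => hx ?_⟩
      have := congrArg (fun T : H →L[ℂ] H => T x) h
      simpa using this
    have hS : (spectrum ℂ A).Nonempty := spectrum.nonempty A
    obtain ⟨w, hw, hwd⟩ :=
      (spectrum.isCompact A).exists_infDist_eq_dist hS z
    refine ⟨w, hw, ?_⟩
    rw [← dist_eq_norm, ← hwd]
    set κ := ‖X‖ * ‖Xinv‖ with hκ
    set δ := Metric.infDist z (spectrum ℂ A) with hδ
    by_contra hcon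
    push_neg at hcon
    have hκ1 : (1 : ℝ) ≤ κ := by
      have : ‖(1 : H →L[ℂ] H)‖ = 1 := ContinuousLinearMap.norm_id
      calc (1 : ℝ) = ‖(1 : H →L[ℂ] H)‖ := this.symm
        _ = ‖X ∘L Xinv‖ := by rw [hX1]
        _ ≤ ‖X‖ * ‖Xinv‖ := ContinuousLinearMap.opNorm_comp_le _ _
    have hεκ : 0 < ε * κ := by positivity
    have hδpos : 0 < δ := lt_trans hεκ hcon
    -- each d i is in the spectrum of A
    have hXinvX : ∀ x : H, Xinv (X x) = x := by
      intro x
      have := congrArg (fun T : H →L[ℂ] H => T x) hX2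
      simpa using this
    have hXXinv : ∀ x : H, X (Xinv x) = x := by
      intro x
      have := congrArg (fun T : H →L[ℂ] H => T x) hX1
      simpa using this
    have hd_spec : ∀ i, d i ∈ spectrum ℂ A := by
      intro i
      rw [spectrum.mem_iff]
      intro hunit
      have hei : ‖e i‖ = 1 := e.orthonormal.1 i
      set v := X (e i) with hv
      have hv0 : v ≠ 0 := by
        intro h0
        have : e i = 0 := by rw [← hXinvX (e i), ← hv, h0, map_zero]
        rw [this, norm_zero] at hei
        norm_num at hei
      have hAv : A v = d i • v := by
        rw [hA]
        show X (Dg (Xinv (X (e i)))) = d i • X (e i)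
        rw [hXinvX, hDg, map_smul]
      have hker : (algebraMap ℂ (H →L[ℂ] H) (d i) - A) v = 0 := by
        simp only [ContinuousLinearMap.sub_apply, hAv,
          Algebra.algebraMap_eq_smul_one, ContinuousLinearMap.smul_apply,
          ContinuousLinearMap.one_apply, sub_self]
      set u := hunit.unit
      have h1 : (↑u⁻¹ * ↑u : H →L[ℂ] H) = 1 := u.inv_mul
      have : v = 0 := by
        calc v = ((↑u⁻¹ * ↑u : H →L[ℂ] H)) v := by rw [h1]; rfl
          _ = (↑u⁻¹ : H →L[ℂ] H) ((↑u : H →L[ℂ] H) v) := rfl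
          _ = (↑u⁻¹ : H →L[ℂ] H) 0 := by
              rw [show ((↑u : H →L[ℂ] H)) v = 0 from by
                rw [IsUnit.unit_spec]; exact hker]
          _ = 0 := map_zero _
      exact hv0 this
    have hdz : ∀ i, δ ≤ ‖d i - z‖ := by
      intro i
      rw [norm_sub_rev, ← dist_eq_norm]
      exact Metric.infDist_le_dist_of_mem (hd_spec i)
    have hdz0 : ∀ i, d i - z ≠ 0 := by
      intro i h0
      have := hdz i
      rw [h0, norm_zero] at this
      linarith
    -- build the diagonal inverse
    obtain ⟨M, hM, hMnorm⟩ := exists_diag e (fun i => (d i - z)⁻¹) δ⁻¹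
      (by positivity) (by
        intro i
        rw [norm_inv]
        exact inv_anti₀ hδpos (hdz i))
    set T := Dg - algebraMap ℂ (H →L[ℂ] H) z with hT
    have hTe : ∀ i, T (e i) = (d i - z) • e i := by
      intro i
      simp only [hT, ContinuousLinearMap.sub_apply, hDg,
        Algebra.algebraMap_eq_smul_one, ContinuousLinearMap.smul_apply,
        ContinuousLinearMap.one_apply, sub_smul]
    have hdense : Dense ((Submodule.span ℂ (Set.range e) : Submodule ℂ H) : Set H) :=
      Submodule.dense_iff_topologicalClosure_eq_top.mpr e.dense_span
    have hMT : M ∘L T = 1 := by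
      refine ContinuousLinearMap.ext_on hdense ?_
      rintro x ⟨i, rfl⟩
      show M (T (e i)) = (1 : H →L[ℂ] H) (e i)
      rw [hTe, map_smul, hM, ContinuousLinearMap.one_apply, smul_smul,
        mul_inv_cancel₀ (hdz0 i), one_smul]
    have hTM : T ∘L M = 1 := by
      refine ContinuousLinearMap.ext_on hdense ?_
      rintro x ⟨i, rfl⟩
      show T (M (e i)) = (1 : H →L[ℂ] H) (e i)
      rw [hM, map_smul, hTe, ContinuousLinearMap.one_apply, smul_smul,
        inv_mul_cancel₀ (hdz0 i), one_smul]
    -- the resolvent of A at z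
    set R := X ∘L M ∘L Xinv with hR
    have hTMapply : ∀ y, T (M y) = y := by
      intro y
      have := congrArg (fun S : H →L[ℂ] H => S y) hTM
      simpa using this
    have hMTapply : ∀ y, M (T y) = y := by
      intro y
      have := congrArg (fun S : H →L[ℂ] H => S y) hMT
      simpa using this
    have hG : X ∘L T ∘L Xinv = A - algebraMap ℂ (H →L[ℂ] H) z := by
      ext x
      show X (T (Xinv x)) = A x - (algebraMap ℂ (H →L[ℂ] H) z) x
      rw [hT, hA]
      simp only [ContinuousLinearMap.sub_apply, map_sub,
        Algebra.algebraMap_eq_smul_one, ContinuousLinearMap.smul_apply,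
        ContinuousLinearMap.one_apply, map_smul, hXXinv,
        ContinuousLinearMap.comp_apply]
    have hGR : (A - algebraMap ℂ (H →L[ℂ] H) z) ∘L R = 1 := by
      rw [← hG]
      ext x
      show X (T (Xinv (X (M (Xinv x))))) = x
      rw [hXinvX, hTMapply, hXXinv]
    have hRG : R ∘L (A - algebraMap ℂ (H →L[ℂ] H) z) = 1 := by
      rw [← hG]
      ext x
      show X (M (Xinv (X (T (Xinv x))))) = x
      rw [hXinvX, hMTapply, hXXinv]
    have hGunit : IsUnit (A - algebraMap ℂ (H →L[ℂ] H) z) := by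
      refine ⟨⟨A - algebraMap ℂ (H →L[ℂ] H) z, R, ?_, ?_⟩, rfl⟩
      · rw [ContinuousLinearMap.mul_def]; exact hGR
      · rw [ContinuousLinearMap.mul_def]; exact hRG
    have hRnorm : ‖R‖ ≤ ‖X‖ * (δ⁻¹ * ‖Xinv‖) := by
      calc ‖R‖ ≤ ‖X‖ * ‖M ∘L Xinv‖ := ContinuousLinearMap.opNorm_comp_le _ _
        _ ≤ ‖X‖ * (‖M‖ * ‖Xinv‖) := by
            gcongr
            exact ContinuousLinearMap.opNorm_comp_le _ _
        _ ≤ ‖X‖ * (δ⁻¹ * ‖Xinv‖) := by gcongr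
    have hRE : ‖R ∘L E‖ < 1 := by
      have h3 : ‖R ∘L E‖ ≤ ‖X‖ * (δ⁻¹ * ‖Xinv‖) * ε := by
        calc ‖R ∘L E‖ ≤ ‖R‖ * ‖E‖ := ContinuousLinearMap.opNorm_comp_le _ _
          _ ≤ ‖X‖ * (δ⁻¹ * ‖Xinv‖) * ε :=
            mul_le_mul hRnorm hE (norm_nonneg _) (by positivity)
      have h4 : ‖X‖ * (δ⁻¹ * ‖Xinv‖) * ε = ε * κ / δ := by
        rw [hκ]; field_simp
      rw [h4] at h3
      exact lt_of_le_of_lt h3 ((div_lt_one hδpos).mpr hcon)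
    have hU : IsUnit (1 + R ∘L E : H →L[ℂ] H) := by
      refine ⟨Units.oneSub (-(R ∘L E)) (by rwa [norm_neg]), ?_⟩
      rw [Units.val_oneSub, sub_neg_eq_add]
    have key : algebraMap ℂ (H →L[ℂ] H) z - (A + E) =
        -((A - algebraMap ℂ (H →L[ℂ] H) z) ∘L (1 + R ∘L E)) := by
      have e1 : (A - algebraMap ℂ (H →L[ℂ] H) z) ∘L (1 + R ∘L E) =
          (A - algebraMap ℂ (H →L[ℂ] H) z) + E := by
        rw [ContinuousLinearMap.comp_add, ← ContinuousLinearMap.comp_assoc, hGR]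
        simp [ContinuousLinearMap.one_def]
      rw [e1]
      abel
    refine (spectrum.mem_iff.mp hz) ?_
    rw [key, ← ContinuousLinearMap.mul_def]
    exact (hGunit.mul hU).neg
  · -- Part 2 : spectrum + ball inclusion
    intro w hw c hc
    refine ⟨algebraMap ℂ (H →L[ℂ] H) c, ?_, ?_⟩
    · calc ‖algebraMap ℂ (H →L[ℂ] H) c‖
          = ‖c • (1 : H →L[ℂ] H)‖ := by rw [Algebra.algebraMap_eq_smul_one]
      _ ≤ ‖c‖ * ‖(1 : H →L[ℂ] H)‖ := norm_smul_le _ _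
      _ ≤ ‖c‖ * 1 := by
          have h1 : ‖(1 : H →L[ℂ] H)‖ ≤ 1 := by
            rw [ContinuousLinearMap.one_def]
            exact ContinuousLinearMap.norm_id_le
          nlinarith [norm_nonneg c]
      _ ≤ ε := by rw [mul_one]; exact hc
    · rw [spectrum.mem_iff] at hw ⊢
      convert hw using 2
      rw [map_add]
      abel
end

section
/- For bounded linear operators B and B̂ between Hilbert spaces and any index i, the difference of squared singular values satisfies |σ_i²(B̂) − σ_i²(B)| ≤ ‖B̂*B̂ − B*B‖, and consequently |σ_i(B̂) − σ_i(B)| ≤ ‖B̂*B̂ − B*B‖ / max(σ_i(B̂), σ_i(B)) whenever the maximum is positive. -/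
/-- The `(i+1)`-st singular value of a bounded operator between Hilbert spaces,
via the Courant–Fischer min-max characterization:
`σ_{i+1}(B) = inf over subspaces F with dim F ≤ i of sup over unit x ⊥ F of ‖B x‖`. -/
noncomputable def sval {H H' : Type*} [NormedAddCommGroup H] [InnerProductSpace ℂ H]
    [NormedAddCommGroup H'] [InnerProductSpace ℂ H'] (B : H →L[ℂ] H') (i : ℕ) : ℝ :=
  ⨅ F : {F : Submodule ℂ H // Module.finrank ℂ ↥F ≤ i},
    ⨆ x : {x : H // x ∈ (F.1)ᗮ ∧ ‖x‖ = 1}, ‖B x.1‖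

section aux

variable {H H' : Type*} [NormedAddCommGroup H] [InnerProductSpace ℂ H]
    [NormedAddCommGroup H'] [InnerProductSpace ℂ H']

instance sval_nonempty_index (i : ℕ) :
    Nonempty {F : Submodule ℂ H // Module.finrank ℂ ↥F ≤ i} :=
  ⟨⟨⊥, by simp⟩⟩

lemma sval_sup_nonneg (B : H →L[ℂ] H') (F : Submodule ℂ H) :
    0 ≤ ⨆ x : {x : H // x ∈ Fᗮ ∧ ‖x‖ = 1}, ‖B x.1‖ :=
  Real.iSup_nonneg fun x => norm_nonneg _

lemma sval_sup_bddAbove (B : H →L[ℂ] H') (F : Submodule ℂ H) :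
    BddAbove (Set.range fun x : {x : H // x ∈ Fᗮ ∧ ‖x‖ = 1} => ‖B x.1‖) := by
  refine ⟨‖B‖, ?_⟩
  rintro r ⟨x, rfl⟩
  calc ‖B x.1‖ ≤ ‖B‖ * ‖x.1‖ := B.le_opNorm _
    _ = ‖B‖ := by rw [x.2.2, mul_one]

lemma sval_nonneg (B : H →L[ℂ] H') (i : ℕ) : 0 ≤ sval B i :=
  le_ciInf fun F => sval_sup_nonneg B F.1

lemma sval_le_sup (B : H →L[ℂ] H') (i : ℕ)
    (F : {F : Submodule ℂ H // Module.finrank ℂ ↥F ≤ i}) :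
    sval B i ≤ ⨆ x : {x : H // x ∈ (F.1)ᗮ ∧ ‖x‖ = 1}, ‖B x.1‖ :=
  ciInf_le ⟨0, by rintro r ⟨F, rfl⟩; exact sval_sup_nonneg B F.1⟩ F

open ContinuousLinearMap in
lemma pointwise_bound [CompleteSpace H] [CompleteSpace H'] (B Bhat : H →L[ℂ] H') (x : H)
    (hx : ‖x‖ = 1) :
    ‖Bhat x‖ ^ 2 ≤ ‖B x‖ ^ 2 + ‖(adjoint Bhat) ∘L Bhat - (adjoint B) ∘L B‖ := by
  set D := (adjoint Bhat) ∘L Bhat - (adjoint B) ∘L B with hD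
  have h1 : ‖Bhat x‖ ^ 2 - ‖B x‖ ^ 2 = RCLike.re (inner ℂ (D x) x : ℂ) := by
    simp [hD, ContinuousLinearMap.sub_apply, inner_sub_left,
      ContinuousLinearMap.adjoint_inner_left, ← inner_self_eq_norm_sq (𝕜 := ℂ)]
  have h2 : RCLike.re (inner ℂ (D x) x : ℂ) ≤ ‖D‖ := by
    calc RCLike.re (inner ℂ (D x) x : ℂ) ≤ ‖(inner ℂ (D x) x : ℂ)‖ := RCLike.re_le_norm _
      _ ≤ ‖D x‖ * ‖x‖ := norm_inner_le_norm _ _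
      _ ≤ (‖D‖ * ‖x‖) * ‖x‖ := by
          have := D.le_opNorm x
          nlinarith [norm_nonneg (D x), norm_nonneg x]
      _ = ‖D‖ := by rw [hx]; ring
  linarith

open ContinuousLinearMap in
lemma sval_sq_le [CompleteSpace H] [CompleteSpace H'] (B Bhat : H →L[ℂ] H') (i : ℕ) :
    sval Bhat i ^ 2 ≤ sval B i ^ 2 + ‖(adjoint Bhat) ∘L Bhat - (adjoint B) ∘L B‖ := by
  set D := (adjoint Bhat) ∘L Bhat - (adjoint B) ∘L B with hD
  have hDnn : (0:ℝ) ≤ ‖D‖ := norm_nonneg _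
  -- per-subspace bound
  have hF : ∀ F : {F : Submodule ℂ H // Module.finrank ℂ ↥F ≤ i},
      (⨆ x : {x : H // x ∈ (F.1)ᗮ ∧ ‖x‖ = 1}, ‖Bhat x.1‖)
        ≤ Real.sqrt ((⨆ x : {x : H // x ∈ (F.1)ᗮ ∧ ‖x‖ = 1}, ‖B x.1‖) ^ 2 + ‖D‖) := by
    intro F
    by_cases hne : Nonempty {x : H // x ∈ (F.1)ᗮ ∧ ‖x‖ = 1}
    · apply ciSup_le
      intro x
      rw [Real.le_sqrt (norm_nonneg _) (by positivity)]
      have h1 := pointwise_bound B Bhat x.1 x.2.2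
      have h2 : ‖B x.1‖ ≤ ⨆ y : {x : H // x ∈ (F.1)ᗮ ∧ ‖x‖ = 1}, ‖B y.1‖ :=
        le_ciSup (sval_sup_bddAbove B F.1) x
      have h3 : (0:ℝ) ≤ ‖B x.1‖ := norm_nonneg _
      nlinarith
    · rw [not_nonempty_iff] at hne
      rw [Real.iSup_of_isEmpty]
      exact Real.sqrt_nonneg _
  -- ε-argument
  have key : ∀ ε > (0:ℝ), sval Bhat i ^ 2 ≤ (sval B i + ε) ^ 2 + ‖D‖ := by
    intro ε hε
    have : sval B i < sval B i + ε := by linarith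
    obtain ⟨F, hFlt⟩ := exists_lt_of_ciInf_lt this
    have h1 : sval Bhat i ≤ Real.sqrt ((sval B i + ε) ^ 2 + ‖D‖) := by
      refine (sval_le_sup Bhat i F).trans ((hF F).trans (Real.sqrt_le_sqrt ?_))
      have h0 := sval_sup_nonneg B (F.1)ᗮᗮ -- dummy to keep names; not used
      have hs := sval_sup_nonneg B F.1
      nlinarith [hFlt.le, sval_nonneg B i]
    have h2 := sval_nonneg Bhat i
    have h3 : sval Bhat i ^ 2 ≤ Real.sqrt ((sval B i + ε) ^ 2 + ‖D‖) ^ 2 := by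
      nlinarith [Real.sqrt_nonneg ((sval B i + ε) ^ 2 + ‖D‖)]
    rwa [Real.sq_sqrt (by nlinarith [sval_nonneg B i])] at h3
  refine le_of_forall_pos_le_add fun δ hδ => ?_
  have hs := sval_nonneg B i
  set ε := min 1 (δ / (2 * sval B i + 1)) with hε
  have hεpos : 0 < ε := lt_min one_pos (div_pos hδ (by linarith))
  have hε1 : ε ≤ 1 := min_le_left _ _
  have hε2 : ε ≤ δ / (2 * sval B i + 1) := min_le_right _ _
  have hε3 : ε * (2 * sval B i + 1) ≤ δ := by
    rw [div_eq_mul_inv] at hε2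
    have h2s : (0:ℝ) < 2 * sval B i + 1 := by linarith
    calc ε * (2 * sval B i + 1) ≤ δ * (2 * sval B i + 1)⁻¹ * (2 * sval B i + 1) := by
          exact mul_le_mul_of_nonneg_right hε2 h2s.le
      _ = δ := by field_simp
  have := key ε hεpos
  nlinarith

end aux

/-- Weyl-type perturbation bound for singular values: for bounded operators `B, B̂`
and any index `i`, `|σᵢ(B̂)² - σᵢ(B)²| ≤ ‖B̂*B̂ - B*B‖`, and consequently
`|σᵢ(B̂) - σᵢ(B)| ≤ ‖B̂*B̂ - B*B‖ / max(σᵢ(B̂), σᵢ(B))` when the maximum is positive. -/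
theorem stmt_5
    {H H' : Type*} [NormedAddCommGroup H] [InnerProductSpace ℂ H] [CompleteSpace H]
    [NormedAddCommGroup H'] [InnerProductSpace ℂ H'] [CompleteSpace H']
    (B Bhat : H →L[ℂ] H') (i : ℕ) :
    |sval Bhat i ^ 2 - sval B i ^ 2| ≤
      ‖(ContinuousLinearMap.adjoint Bhat) ∘L Bhat - (ContinuousLinearMap.adjoint B) ∘L B‖ ∧
    (0 < max (sval Bhat i) (sval B i) →
      |sval Bhat i - sval B i| ≤
        ‖(ContinuousLinearMap.adjoint Bhat) ∘L Bhat - (ContinuousLinearMap.adjoint B) ∘L B‖ /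
          max (sval Bhat i) (sval B i)) := by
  set a := sval Bhat i with ha
  set b := sval B i with hb
  set c := ‖(ContinuousLinearMap.adjoint Bhat) ∘L Bhat - (ContinuousLinearMap.adjoint B) ∘L B‖
    with hc
  have h1 : a ^ 2 ≤ b ^ 2 + c := sval_sq_le B Bhat i
  have h2 : b ^ 2 ≤ a ^ 2 + c := by
    have := sval_sq_le Bhat B i
    rwa [norm_sub_rev] at this
  have han : 0 ≤ a := sval_nonneg Bhat i
  have hbn : 0 ≤ b := sval_nonneg B i
  have habs : |a ^ 2 - b ^ 2| ≤ c := abs_le.2 ⟨by linarith, by linarith⟩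
  refine ⟨habs, fun hmax => ?_⟩
  rw [le_div_iff₀ hmax]
  rcases le_total a b with h | h
  · rw [abs_of_nonpos (by linarith), max_eq_right h]
    nlinarith
  · rw [abs_of_nonneg (by linarith), max_eq_left h]
    nlinarith
end

section
/- Let C be a positive self-adjoint trace-class operator on a separable Hilbert space whose eigenvalues satisfy λ_j(C) ≤ c·j^{−1/β} for some β ∈ (0,1) and c > 0. Then for every γ > 0, tr(C_γ^{−1} C) ≤ (c^β/(1−β))·γ^{−β}, where C_γ = C + γI. -/
open Real

/-- Key convexity inequality: for `1 < p`, `0 < s ≤ t`,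
`(p-1)·(t-s)·t^{-p} ≤ s^{1-p} - t^{1-p}`. -/
private lemma key_ineq {p s t : ℝ} (hp : 1 < p) (hs : 0 < s) (hst : s ≤ t) :
    (p - 1) * ((t - s) * t ^ (-p)) ≤ s ^ (1 - p) - t ^ (1 - p) := by
  have ht : 0 < t := hs.trans_le hst
  set w : ℝ := (t - s) / t with hw
  have hw0 : 0 ≤ w := div_nonneg (by linarith) ht.le
  have hw1 : w < 1 := (div_lt_one ht).mpr (by linarith)
  have h1w : 0 < 1 - w := by linarith
  have hs_eq : s = t * (1 - w) := by
    have h := div_mul_cancel₀ (t - s) ht.ne'; rw [← hw] at h; linear_combination h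
  have hprod : (1 - w) ^ (p - 1) * (1 + (p - 1) * w) ≤ 1 := by
    have h1 : (1 - w) ^ (p - 1) ≤ Real.exp (-((p - 1) * w)) := by
      rw [Real.rpow_def_of_pos h1w]
      apply Real.exp_le_exp.mpr
      have hlog := Real.log_le_sub_one_of_pos h1w
      nlinarith [mul_le_mul_of_nonneg_left hlog (by linarith : (0:ℝ) ≤ p - 1)]
    have h2 : 1 + (p - 1) * w ≤ Real.exp ((p - 1) * w) := by
      have := Real.add_one_le_exp ((p - 1) * w); linarith
    calc (1 - w) ^ (p - 1) * (1 + (p - 1) * w)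
        ≤ Real.exp (-((p - 1) * w)) * Real.exp ((p - 1) * w) :=
          mul_le_mul h1 h2 (by nlinarith) (Real.exp_nonneg _)
      _ = 1 := by rw [← Real.exp_add, neg_add_cancel, Real.exp_zero]
  have hpow_pos : (0:ℝ) < (1 - w) ^ (p - 1) := Real.rpow_pos_of_pos h1w _
  have hbern : 1 + (p - 1) * w ≤ (1 - w) ^ (1 - p) := by
    have hinv : (1 - w) ^ (1 - p) = ((1 - w) ^ (p - 1))⁻¹ := by
      rw [show (1:ℝ) - p = -(p - 1) by ring, Real.rpow_neg h1w.le]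
    rw [hinv, inv_eq_one_div, le_div_iff₀ hpow_pos]
    nlinarith [hprod]
  have htp : 0 < t ^ (1 - p) := Real.rpow_pos_of_pos ht _
  have hts : t - s = w * t := by
    have h := div_mul_cancel₀ (t - s) ht.ne'; rw [← hw] at h; linear_combination -h
  have h2 : (t - s) * t ^ (-p) = w * t ^ (1 - p) := by
    have ht1p : t ^ (1 - p) = t * t ^ (-p) := by
      rw [show (1:ℝ) - p = 1 + (-p) by ring, Real.rpow_add ht, Real.rpow_one]
    rw [hts, ht1p]; ring
  calc (p - 1) * ((t - s) * t ^ (-p)) = ((p - 1) * w) * t ^ (1 - p) := by rw [h2]; ring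
    _ ≤ ((1 - w) ^ (1 - p) - 1) * t ^ (1 - p) :=
        mul_le_mul_of_nonneg_right (by linarith [hbern]) htp.le
    _ = s ^ (1 - p) - t ^ (1 - p) := by
        rw [hs_eq, Real.mul_rpow ht.le h1w.le]; ring

/-- Effective dimension bound: let `C` be a positive self-adjoint trace-class operator
with eigenvalues `λ_j` (in a Hilbert basis `e`) satisfying `λ_j ≤ c·j^{-1/β}` for some
`β ∈ (0,1)` and `c > 0`.  Then for every `γ > 0`,
`tr(C_γ^{-1} C) = ∑_j λ_j/(λ_j + γ) ≤ (c^β/(1-β))·γ^{-β}`. -/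
theorem stmt_14
    {H : Type*} [NormedAddCommGroup H] [InnerProductSpace ℂ H] [CompleteSpace H]
    (C : H →L[ℂ] H) (hC : C.IsPositive)
    (e : HilbertBasis ℕ ℂ H) (lam : ℕ → ℝ) (hlam0 : ∀ j, 0 ≤ lam j)
    (heig : ∀ j, C (e j) = (lam j : ℂ) • e j)
    (htrace : Summable lam)
    (β c : ℝ) (hβ0 : 0 < β) (hβ1 : β < 1) (hc : 0 < c)
    (hdecay : ∀ j : ℕ, lam j ≤ c * ((j : ℝ) + 1) ^ (-(1 : ℝ) / β))
    (γ : ℝ) (hγ : 0 < γ) :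
    ∑' j, lam j / (lam j + γ) ≤ c ^ β / (1 - β) * γ ^ (-β) := by
  classical
  set p : ℝ := 1 / β with hpdef
  have hp : 1 < p := one_lt_one_div hβ0 hβ1
  set d : ℝ := c / γ with hddef
  have hd : 0 < d := div_pos hc hγ
  set a : ℝ := d ^ β with hadef
  have ha : 0 < a := Real.rpow_pos_of_pos hd β
  have hβp : β * p = 1 := by rw [hpdef]; field_simp
  have hap : a ^ (-p) = d⁻¹ := by
    rw [hadef, ← Real.rpow_mul hd.le, show β * (-p) = -1 by rw [mul_neg, hβp],
      Real.rpow_neg_one]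
  have hexp : -(1:ℝ)/β = -p := by rw [hpdef]; ring
  set Φ : ℝ → ℝ := fun x => if x ≤ a then x else a + d * (a ^ (1-p) - x ^ (1-p)) / (p-1)
    with hΦdef
  -- step inequality for Φ
  have hstep : ∀ x : ℝ, 0 ≤ x → min 1 (d * (x+1) ^ (-p)) ≤ Φ (x+1) - Φ x := by
    intro x hx
    by_cases h1a : x + 1 ≤ a
    · have hxa : x ≤ a := by linarith
      have heq : Φ (x+1) - Φ x = 1 := by
        simp only [hΦdef]; rw [if_pos h1a, if_pos hxa]; ring
      rw [heq]; exact min_le_left _ _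
    · push_neg at h1a
      have hx1 : (0:ℝ) < x + 1 := by linarith
      have hdx1 : d * (x+1) ^ (-p) ≤ 1 := by
        have hmono : (x+1) ^ (-p) ≤ a ^ (-p) :=
          Real.rpow_le_rpow_of_nonpos ha h1a.le (by linarith)
        calc d * (x+1) ^ (-p) ≤ d * a ^ (-p) :=
              mul_le_mul_of_nonneg_left hmono hd.le
          _ = 1 := by rw [hap]; field_simp
      by_cases hxa : x ≤ a
      · have hkey := key_ineq hp ha h1a.le
        have hΦx : Φ x = x := by simp only [hΦdef]; rw [if_pos hxa]
        have hΦx1 : Φ (x+1) = a + d * (a ^ (1-p) - (x+1) ^ (1-p)) / (p-1) := by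
          simp only [hΦdef]; rw [if_neg (not_le.mpr h1a)]
        rw [hΦx, hΦx1]
        have h3 : (x + 1 - a) * (d * (x+1) ^ (-p)) ≤ d * (a ^ (1-p) - (x+1) ^ (1-p)) / (p-1) := by
          rw [le_div_iff₀ (by linarith : (0:ℝ) < p - 1)]
          nlinarith [mul_le_mul_of_nonneg_left hkey hd.le]
        have h4 : (a - x) * (d * (x+1) ^ (-p)) ≤ a - x := by
          nlinarith [hdx1, mul_nonneg hd.le (Real.rpow_nonneg hx1.le (-p))]
        calc min 1 (d * (x+1) ^ (-p)) ≤ d * (x+1) ^ (-p) := min_le_right _ _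
          _ = (x + 1 - a) * (d * (x+1) ^ (-p)) + (a - x) * (d * (x+1) ^ (-p)) := by ring
          _ ≤ d * (a ^ (1-p) - (x+1) ^ (1-p)) / (p-1) + (a - x) := by linarith
          _ = a + d * (a ^ (1-p) - (x+1) ^ (1-p)) / (p-1) - x := by ring
      · push_neg at hxa
        have hx0 : 0 < x := ha.trans hxa
        have hkey := key_ineq hp hx0 (by linarith : x ≤ x + 1)
        have hΦx : Φ x = a + d * (a ^ (1-p) - x ^ (1-p)) / (p-1) := by
          simp only [hΦdef]; rw [if_neg (not_le.mpr hxa)]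
        have hΦx1 : Φ (x+1) = a + d * (a ^ (1-p) - (x+1) ^ (1-p)) / (p-1) := by
          simp only [hΦdef]; rw [if_neg (not_le.mpr h1a)]
        rw [hΦx, hΦx1]
        have h3 : d * (x+1) ^ (-p) ≤ d * (x ^ (1-p) - (x+1) ^ (1-p)) / (p-1) := by
          rw [le_div_iff₀ (by linarith : (0:ℝ) < p - 1)]
          nlinarith [mul_le_mul_of_nonneg_left hkey hd.le]
        have hne : p - 1 ≠ 0 := by intro h; linarith [hp]
        calc min 1 (d * (x+1) ^ (-p)) ≤ d * (x+1) ^ (-p) := min_le_right _ _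
          _ ≤ d * (x ^ (1-p) - (x+1) ^ (1-p)) / (p-1) := h3
          _ = (a + d * (a ^ (1-p) - (x+1) ^ (1-p)) / (p-1))
              - (a + d * (a ^ (1-p) - x ^ (1-p)) / (p-1)) := by
              field_simp; ring
  -- termwise bound
  have hterm : ∀ j : ℕ, lam j / (lam j + γ) ≤ min 1 (d * ((j:ℝ)+1) ^ (-p)) := by
    intro j
    have hden : 0 < lam j + γ := by linarith [hlam0 j]
    refine le_min ((div_le_one hden).mpr (by linarith)) ?_
    have h1 : lam j / (lam j + γ) ≤ lam j / γ := by
      gcongr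
      · exact hlam0 j
      · linarith [hlam0 j]
    have h2 : lam j / γ ≤ d * ((j:ℝ)+1) ^ (-p) := by
      have hdj := hdecay j
      rw [hexp] at hdj
      rw [hddef, div_mul_eq_mul_div]
      gcongr
    exact h1.trans h2
  -- partial sums bounded by Φ
  have hsum : ∀ n : ℕ, ∑ j ∈ Finset.range n, lam j / (lam j + γ) ≤ Φ n := by
    intro n
    induction n with
    | zero =>
      simp only [Finset.range_zero, Finset.sum_empty, Nat.cast_zero, hΦdef]
      rw [if_pos ha.le]
    | succ n ih =>
      rw [Finset.sum_range_succ]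
      have h1 := hstep (n : ℝ) (Nat.cast_nonneg n)
      have h2 := (hterm n).trans h1
      have hcast : ((n+1 : ℕ) : ℝ) = (n:ℝ) + 1 := by push_cast; ring
      rw [hcast]
      linarith
  -- Φ is bounded by a/(1-β)
  have h1β : 0 < 1 - β := by linarith
  have hΦle : ∀ x : ℝ, Φ x ≤ a / (1 - β) := by
    intro x
    have hda : d * a ^ (1-p) = a := by
      have h : a ^ (1-p) = a * a ^ (-p) := by
        rw [show (1:ℝ)-p = 1 + (-p) by ring, Real.rpow_add ha, Real.rpow_one]
      rw [h, hap]; field_simp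
    have hbig : a + d * a ^ (1-p) / (p-1) = a / (1-β) := by
      rw [hda, hpdef]
      have hβne : β ≠ 0 := ne_of_gt hβ0
      have h1βne : (1:ℝ) - β ≠ 0 := ne_of_gt h1β
      have hpgt : (1:ℝ) < 1/β := hpdef ▸ hp
      have hpne : (1:ℝ)/β - 1 ≠ 0 := ne_of_gt (by linarith)
      field_simp
      ring
    by_cases hxa : x ≤ a
    · simp only [hΦdef]; rw [if_pos hxa]
      calc x ≤ a := hxa
        _ ≤ a / (1-β) := by rw [le_div_iff₀ h1β]; nlinarith
    · simp only [hΦdef]; rw [if_neg hxa]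
      push_neg at hxa
      have hx1p : 0 ≤ x ^ (1-p) := Real.rpow_nonneg (ha.trans hxa).le _
      have : a + d * (a ^ (1-p) - x ^ (1-p)) / (p-1) ≤ a + d * a ^ (1-p) / (p-1) := by
        have := mul_nonneg hd.le hx1p
        have hp1 : (0:ℝ) < p - 1 := by linarith
        have : d * (a ^ (1-p) - x ^ (1-p)) ≤ d * a ^ (1-p) := by nlinarith
        gcongr
      linarith [hbig ▸ this]
  -- conclude
  have hfinal : a / (1-β) = c ^ β / (1 - β) * γ ^ (-β) := by
    rw [hadef, hddef, Real.div_rpow hc.le hγ.le, Real.rpow_neg hγ.le]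
    ring
  rw [← hfinal]
  apply Real.tsum_le_of_sum_range_le
    (fun n => div_nonneg (hlam0 n) (by linarith [hlam0 n]))
  intro n
  exact (hsum n).trans (hΦle n)
end
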